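/- For any n ≥ 3, there exists a boolean function κ : 𝔹^n → 𝔹 and a point v ∈ 𝔹^n such that feature n is irrelevant for the instance (v, κ(v)) yet its Shapley value Sv(n) is nonzero. -/
import Mathlib


open Finset

/-- `X` is a weak abductive explanation (weak AXp) for classifier `κ` at point `v`:
every point agreeing with `v` on `X` gets the same prediction as `v`. -/
def weakAXp {n : ℕ} (κ : (Fin n → Bool) → Bool) (v : Fin n → Bool)
    (X : Finset (Fin n)) : Prop :=
  ∀ x : Fin n → Bool, (∀ i ∈ X, x i = v i) → κ x = κ v

/-- `X` is an AXp: a subset-minimal weak AXp. -/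
def AXp {n : ℕ} (κ : (Fin n → Bool) → Bool) (v : Fin n → Bool)
    (X : Finset (Fin n)) : Prop :=
  weakAXp κ v X ∧ ∀ X' ⊂ X, ¬ weakAXp κ v X'

/-- `Y` is a weak contrastive explanation (weak CXp) for `κ` at `v`:
some point agreeing with `v` outside `Y` gets a different prediction. -/
def weakCXp {n : ℕ} (κ : (Fin n → Bool) → Bool) (v : Fin n → Bool)
    (Y : Finset (Fin n)) : Prop :=
  ∃ x : Fin n → Bool, (∀ i ∉ Y, x i = v i) ∧ κ x ≠ κ v

/-- `Y` is a CXp: a subset-minimal weak CXp. -/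
def CXp {n : ℕ} (κ : (Fin n → Bool) → Bool) (v : Fin n → Bool)
    (Y : Finset (Fin n)) : Prop :=
  weakCXp κ v Y ∧ ∀ Y' ⊂ Y, ¬ weakCXp κ v Y'

/-- A feature is relevant if it occurs in some AXp. -/
def Relevant {n : ℕ} (κ : (Fin n → Bool) → Bool) (v : Fin n → Bool) (i : Fin n) : Prop :=
  ∃ X, AXp κ v X ∧ i ∈ X

/-- A feature is irrelevant if it occurs in no AXp. -/
def Irrelevant {n : ℕ} (κ : (Fin n → Bool) → Bool) (v : Fin n → Bool) (i : Fin n) : Prop :=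
  ¬ Relevant κ v i

/-- `phi κ v S` : average value of `κ` over points agreeing with `v` on `S`
(uniform distribution). -/
noncomputable def phi {n : ℕ} (κ : (Fin n → Bool) → Bool) (v : Fin n → Bool)
    (S : Finset (Fin n)) : ℝ :=
  (1 / 2 ^ (n - S.card)) *
    ∑ x ∈ Finset.univ.filter (fun x : Fin n → Bool => ∀ i ∈ S, x i = v i),
      (if κ x then (1 : ℝ) else 0)

/-- Shapley value of feature `i` for classifier `κ` at point `v`. -/
noncomputable def Sv {n : ℕ} (κ : (Fin n → Bool) → Bool) (v : Fin n → Bool)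
    (i : Fin n) : ℝ :=
  ∑ S ∈ (Finset.univ.erase i).powerset,
    ((S.card.factorial * (n - S.card - 1).factorial : ℝ) / n.factorial) *
      (phi κ v (insert i S) - phi κ v S)

section Aux

variable {n : ℕ}

/-- counting function -/
noncomputable def Ncnt (κ : (Fin n → Bool) → Bool) (v : Fin n → Bool)
    (S : Finset (Fin n)) : ℕ :=
  ((Finset.univ.filter (fun x : Fin n → Bool => ∀ i ∈ S, x i = v i)).filter
    (fun x => κ x = true)).card

lemma phi_eq_Ncnt (κ : (Fin n → Bool) → Bool) (v : Fin n → Bool)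
    (S : Finset (Fin n)) :
    phi κ v S = (1 / 2 ^ (n - S.card)) * (Ncnt κ v S : ℝ) := by
  unfold phi Ncnt
  congr 1
  rw [Finset.sum_boole]

end Aux

theorem stmt5 (n : ℕ) (hn : 3 ≤ n) :
    ∃ (κ : (Fin n → Bool) → Bool) (v : Fin n → Bool),
      Irrelevant κ v ⟨n - 1, by omega⟩ ∧ Sv κ v ⟨n - 1, by omega⟩ ≠ 0 := by
  have hna : 0 < n := by omega
  have hnb : 1 < n := by omega
  have hnc : n - 1 < n := by omega
  set a : Fin n := ⟨0, hna⟩ with ha'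
  set b : Fin n := ⟨1, hnb⟩ with hb'
  set c : Fin n := ⟨n - 1, hnc⟩ with hc'
  have hab : a ≠ b := by simp [ha', hb', Fin.ext_iff]
  have hac : a ≠ c := by simp [ha', hc', Fin.ext_iff]; omega
  have hbc : b ≠ c := by simp [hb', hc', Fin.ext_iff]; omega
  set κ : (Fin n → Bool) → Bool := fun x => x a || (x b && x c) with hκ
  set v : Fin n → Bool := fun j => decide (j = a) with hv
  have hva : v a = true := by simp [hv]
  have hvb : v b = false := by simp [hv, Ne.symm hab]
  have hvc : v c = false := by simp [hv, Ne.symm hac]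
  have hκv : κ v = true := by simp [hκ, hva]
  refine ⟨κ, v, ?_, ?_⟩
  · -- Irrelevance
    rintro ⟨X, ⟨hwX, hmin⟩, hcX⟩
    have hcX : c ∈ X := hcX
    have haX : a ∈ X := by
      by_contra haX
      have hagree : ∀ j ∈ X, Function.update v a false j = v j := by
        intro j hj
        exact Function.update_of_ne (fun h : j = a => haX (by rw [← h]; exact hj)) _ _
      have := hwX (Function.update v a false) hagree
      rw [hκv] at this
      have hfalse : κ (Function.update v a false) = false := by
        simp [hκ, Function.update_self, Function.update_of_ne (Ne.symm hab), hvb]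
      rw [hfalse] at this
      exact absurd this (by simp)
    have hw : weakAXp κ v {a} := by
      intro x hx
      have hxa : x a = true := by
        rw [hx a (Finset.mem_singleton_self a), hva]
      rw [hκv]
      simp [hκ, hxa]
    refine hmin {a} ?_ hw
    refine Finset.ssubset_iff_subset_ne.mpr ⟨Finset.singleton_subset_iff.mpr haX, ?_⟩
    intro h
    rw [← h] at hcX
    exact hac (Finset.mem_singleton.mp hcX).symm
  · -- Nonzero Shapley value: show Sv κ v c < 0
    show Sv κ v c ≠ 0
    -- key counting facts
    have hkey : ∀ S : Finset (Fin n), c ∉ S →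
        2 * Ncnt κ v (insert c S) ≤ Ncnt κ v S ∧
        (S = ∅ → 2 * Ncnt κ v (insert c S) < Ncnt κ v S) := by
      intro S hcS
      set A : Finset (Fin n → Bool) :=
        (Finset.univ.filter (fun x : Fin n → Bool => ∀ i ∈ S, x i = v i)).filter
          (fun x => κ x = true) with hA
      set A0 : Finset (Fin n → Bool) := A.filter (fun x => x c = false) with hA0
      set A1 : Finset (Fin n → Bool) := A.filter (fun x => x c = true) with hA1
      have hsplit : Ncnt κ v S = A1.card + A0.card := by
        have e0 : A0 = A.filter (fun x => ¬ x c = true) := by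
          ext x
          simp [hA0]
        rw [show Ncnt κ v S = A.card from rfl, e0]
        exact (Finset.card_filter_add_card_filter_not
          (fun x : Fin n → Bool => x c = true)).symm
      have hmemA : ∀ x ∈ A, (∀ i ∈ S, x i = v i) ∧ κ x = true := by
        intro x hx
        rw [hA, Finset.mem_filter, Finset.mem_filter] at hx
        exact ⟨hx.1.2, hx.2⟩
      have hNins : Ncnt κ v (insert c S) = A0.card := by
        unfold Ncnt
        rw [hA0, hA]
        congr 1
        ext x
        simp only [Finset.mem_filter, Finset.mem_univ, true_and,
          Finset.forall_mem_insert, hvc]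
        tauto
      -- a-coordinate of members of A0 is true
      have hA0a : ∀ x ∈ A0, x a = true := by
        intro x hx
        rw [hA0, Finset.mem_filter] at hx
        obtain ⟨hxA, hxc⟩ := hx
        have hκx := (hmemA x hxA).2
        simpa [hκ, hxc] using hκx
      -- the flip map
      have hmaps : ∀ x ∈ A0, Function.update x c true ∈ A1 := by
        intro x hx
        have hxa := hA0a x hx
        rw [hA0, Finset.mem_filter] at hx
        obtain ⟨hxA, hxc⟩ := hx
        obtain ⟨hagr, hκx⟩ := hmemA x hxA
        rw [hA1, Finset.mem_filter]
        refine ⟨?_, Function.update_self _ _ _⟩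
        rw [hA, Finset.mem_filter, Finset.mem_filter]
        refine ⟨⟨Finset.mem_univ _, ?_⟩, ?_⟩
        · intro i hi
          rw [Function.update_of_ne (fun h : i = c => hcS (by rw [← h]; exact hi))]
          exact hagr i hi
        · simp [hκ, Function.update_of_ne hac, hxa]
      have hinj : Set.InjOn (fun x => Function.update x c true) (A0 : Set (Fin n → Bool)) := by
        intro x hx y hy hxy
        simp only [Finset.mem_coe] at hx hy
        have hxc : x c = false := by
          rw [hA0, Finset.mem_filter] at hx; exact hx.2
        have hyc : y c = false := by
          rw [hA0, Finset.mem_filter] at hy; exact hy.2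
        funext j
        by_cases hj : j = c
        · subst hj; rw [hxc, hyc]
        · have := congrFun hxy j
          simpa [Function.update_of_ne hj] using this
      have hle : A0.card ≤ A1.card :=
        Finset.card_le_card_of_injOn _ hmaps hinj
      constructor
      · rw [hNins, hsplit]; omega
      · intro hSempty
        subst hSempty
        -- witness w ∈ A1 not in the image
        set w : Fin n → Bool := fun j => decide (j ≠ a) with hw
        have hwa : w a = false := by simp [hw]
        have hwb : w b = true := by simp [hw, Ne.symm hab]
        have hwc : w c = true := by simp [hw, Ne.symm hac]
        have hwA1 : w ∈ A1 := by
          rw [hA1, Finset.mem_filter, hA, Finset.mem_filter, Finset.mem_filter]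
          refine ⟨⟨⟨Finset.mem_univ _, by simp⟩, ?_⟩, hwc⟩
          simp [hκ, hwb, hwc]
        have hmaps' : ∀ x ∈ A0, Function.update x c true ∈ A1.erase w := by
          intro x hx
          refine Finset.mem_erase.mpr ⟨?_, hmaps x hx⟩
          intro heq
          have := congrFun heq a
          rw [Function.update_of_ne hac, hA0a x hx, hwa] at this
          exact absurd this (by simp)
        have hlt : A0.card < A1.card := by
          have h1 : A0.card ≤ (A1.erase w).card :=
            Finset.card_le_card_of_injOn _ hmaps' hinj
          have h2 : (A1.erase w).card < A1.card :=
            Finset.card_erase_lt_of_mem hwA1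
          omega
        rw [hNins, hsplit]; omega
    -- phi inequalities
    have hcard_erase : (Finset.univ.erase c).card = n - 1 := by
      rw [Finset.card_erase_of_mem (Finset.mem_univ c), Finset.card_univ,
        Fintype.card_fin]
    have hphidiff : ∀ S ∈ (Finset.univ.erase c).powerset,
        phi κ v (insert c S) - phi κ v S ≤ 0 ∧
        (S = ∅ → phi κ v (insert c S) - phi κ v S < 0) := by
      intro S hS
      rw [Finset.mem_powerset] at hS
      have hcS : c ∉ S := fun h => (Finset.mem_erase.mp (hS h)).1 rfl
      have hcardS : S.card ≤ n - 1 := hcard_erase ▸ Finset.card_le_card hS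
      have hcardins : (insert c S).card = S.card + 1 :=
        Finset.card_insert_of_notMem hcS
      set k : ℕ := n - S.card - 1 with hk
      have hpow : (2 : ℝ) ^ (n - S.card) = 2 * 2 ^ k := by
        have hk1 : n - S.card = k + 1 := by omega
        rw [hk1, pow_succ]
        ring
      have hpowins : (n - (insert c S).card) = k := by
        rw [hcardins]; omega
      obtain ⟨hle, hlt⟩ := hkey S hcS
      have hkpos : (0 : ℝ) < 2 ^ k := by positivity
      rw [phi_eq_Ncnt, phi_eq_Ncnt, hpowins, hpow]
      constructor
      · have : (2 * Ncnt κ v (insert c S) : ℝ) ≤ (Ncnt κ v S : ℝ) := by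
          exact_mod_cast hle
        rw [sub_nonpos, div_mul_eq_mul_div, div_mul_eq_mul_div, one_mul, one_mul,
          div_le_div_iff₀ hkpos (by positivity)]
        nlinarith [hkpos]
      · intro hSe
        have hlt' := hlt hSe
        have : (2 * Ncnt κ v (insert c S) : ℝ) < (Ncnt κ v S : ℝ) := by
          exact_mod_cast hlt'
        rw [sub_neg, div_mul_eq_mul_div, div_mul_eq_mul_div, one_mul, one_mul,
          div_lt_div_iff₀ hkpos (by positivity)]
        nlinarith [hkpos]
    have hSvneg : Sv κ v c < 0 := by
      unfold Sv
      have h0mem : (∅ : Finset (Fin n)) ∈ (Finset.univ.erase c).powerset :=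
        Finset.empty_mem_powerset _
      have hwpos : ∀ S : Finset (Fin n),
          (0 : ℝ) < (S.card.factorial * (n - S.card - 1).factorial : ℝ) / n.factorial := by
        intro S
        apply div_pos
        · have h1 : (0:ℝ) < (S.card.factorial : ℝ) :=
            Nat.cast_pos.mpr (Nat.factorial_pos _)
          have h2 : (0:ℝ) < ((n - S.card - 1).factorial : ℝ) :=
            Nat.cast_pos.mpr (Nat.factorial_pos _)
          positivity
        · exact Nat.cast_pos.mpr (Nat.factorial_pos _)
      calc ∑ S ∈ (Finset.univ.erase c).powerset,
            ((S.card.factorial * (n - S.card - 1).factorial : ℝ) / n.factorial) *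
              (phi κ v (insert c S) - phi κ v S)
          < ∑ S ∈ (Finset.univ.erase c).powerset, (0 : ℝ) := by
            apply Finset.sum_lt_sum
            · intro S hS
              exact mul_nonpos_of_nonneg_of_nonpos (hwpos S).le
                ((hphidiff S hS).1)
            · exact ⟨∅, h0mem,
                mul_neg_of_pos_of_neg (hwpos ∅) ((hphidiff ∅ h0mem).2 rfl)⟩
        _ = 0 := Finset.sum_const_zero
    exact ne_of_lt hSvneg
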